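/- Let a, b > 0 with a ≠ b, and let π be the probability measure on {0,1} with π(0) = b/(a+b), π(1) = a/(a+b). Then for every positive function f : {0,1} → (0,∞), the two-state log-Sobolev inequality (ab/(a+b))·(√f(0) - √f(1))² ≥ ρ·Ent_π(f) holds with ρ = (a-b)/(log a - log b). -/

import Mathlib

open Real Set



/-- GM < LM helper: `2 log x < x - 1/x` for `x > 1`. -/
lemma two_log_lt {x : ℝ} (hx : 1 < x) : 2 * Real.log x < x - 1/x := by
  have h0 : (0:ℝ) < x := lt_trans one_pos hx
  have hl : 0 < Real.log x := Real.log_pos hx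
  have h := (Real.self_lt_sinh_iff (x := Real.log x)).2 hl
  rw [Real.sinh_eq, Real.exp_log h0, Real.exp_neg, Real.exp_log h0] at h
  rw [one_div]
  linarith

/-- LM < AM helper: `2(x-1) < (x+1) log x` for `x > 1`. -/
lemma am_aux {x : ℝ} (hx : 1 < x) : 2 * (x - 1) < (x + 1) * Real.log x := by
  have key : StrictMonoOn (fun x : ℝ => (x+1) * Real.log x - 2*(x-1)) (Set.Ici 1) := by
    apply strictMonoOn_of_deriv_pos (convex_Ici 1)
    · apply ContinuousOn.sub
      · exact (continuous_id.add continuous_const).continuousOn.mul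
          (Real.continuousOn_log.mono (fun y hy => by
            simp only [Set.mem_compl_iff, Set.mem_singleton_iff]
            intro h; rw [h] at hy; simp at hy; linarith [hy]))
      · exact (continuous_const.mul (continuous_id.sub continuous_const)).continuousOn
    · intro y hy
      rw [interior_Ici] at hy
      have hy1 : (1:ℝ) < y := hy
      have hy0 : (0:ℝ) < y := lt_trans one_pos hy1
      have hd : HasDerivAt (fun x : ℝ => (x+1) * Real.log x - 2*(x-1))
          (Real.log y + (y+1) * y⁻¹ - 2) y := by
        have h1 : HasDerivAt (fun x : ℝ => (x+1)) 1 y := (hasDerivAt_id y).add_const 1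
        have h2 : HasDerivAt Real.log y⁻¹ y := Real.hasDerivAt_log hy0.ne'
        have h3 := h1.mul h2
        have h4 : HasDerivAt (fun x : ℝ => 2*(x-1)) 2 y := by
          simpa using ((hasDerivAt_id y).sub_const 1).const_mul 2
        have h5 : HasDerivAt (fun x : ℝ => (x+1) * Real.log x - 2*(x-1)) _ y := h3.sub h4
        convert h5 using 1; ring
      rw [hd.deriv]
      have hlog : 1 - y⁻¹ < Real.log y := by
        have := Real.log_lt_sub_one_of_pos (inv_pos.2 hy0) (by
          intro h; rw [inv_eq_one] at h; linarith)
        rw [Real.log_inv] at this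
        linarith
      have : (y+1) * y⁻¹ = 1 + y⁻¹ := by field_simp
      rw [this]
      linarith
  have := key (Set.self_mem_Ici) (Set.mem_Ici.2 hx.le) hx
  simp at this
  linarith



noncomputable def Psi (p q c s : ℝ) : ℝ :=
  q * (1 - 1/s) - 2*c*Real.log s + c*Real.log (p*s^2 + q)

noncomputable def Hf (p q c s : ℝ) : ℝ :=
  p*q*(s-1)^2 - c*(p*s^2*(2*Real.log s) - (p*s^2+q)*Real.log (p*s^2+q))

lemma hasDerivAt_Psi (p q c : ℝ) (hp : 0 < p) (hq : 0 < q) {x : ℝ} (hx : 0 < x) :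
    HasDerivAt (Psi p q c) (q*(p*x^2 - 2*c*x + q)/(x^2*(p*x^2+q))) x := by
  have hx0 : x ≠ 0 := ne_of_gt hx
  have hpx : 0 < p*x^2 + q := by positivity
  have d1 : HasDerivAt (fun s : ℝ => q * (1 - 1/s)) (q * (1/x^2)) x := by
    have : HasDerivAt (fun s : ℝ => 1 - 1/s) (1/x^2) x := by
      simpa [one_div] using ((hasDerivAt_inv hx0).const_sub 1)
    simpa using this.const_mul q
  have d2 : HasDerivAt (fun s : ℝ => 2*c*Real.log s) (2*c*x⁻¹) x :=
    (Real.hasDerivAt_log hx0).const_mul (2*c)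
  have d3 : HasDerivAt (fun s : ℝ => p*s^2 + q) (p*(2*x)) x := by
    simpa using ((hasDerivAt_pow 2 x).const_mul p).add_const q
  have d4 : HasDerivAt (fun s : ℝ => c*Real.log (p*s^2+q)) (c*(p*(2*x)/(p*x^2+q))) x :=
    (d3.log hpx.ne').const_mul c
  have : HasDerivAt (Psi p q c) _ x := (d1.sub d2).add d4
  convert this using 1
  field_simp
  ring

lemma hasDerivAt_Hf (p q c : ℝ) (hp : 0 < p) (hq : 0 < q) {x : ℝ} (hx : 0 < x) :
    HasDerivAt (Hf p q c) (2*p*x*(Psi p q c x)) x := by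
  have hx0 : x ≠ 0 := ne_of_gt hx
  have hpx : 0 < p*x^2 + q := by positivity
  have d0 : HasDerivAt (fun s : ℝ => p*q*(s-1)^2) (p*q*(2*(x-1))) x := by
    have : HasDerivAt (fun s : ℝ => (s-1)^2) (2*(x-1)) x := by
      have h5 : HasDerivAt (fun s : ℝ => (s-1)^2) _ x := ((hasDerivAt_id x).sub_const 1).pow 2
      convert h5 using 1; norm_num
    simpa using this.const_mul (p*q)
  have d3 : HasDerivAt (fun s : ℝ => p*s^2 + q) (p*(2*x)) x := by
    simpa using ((hasDerivAt_pow 2 x).const_mul p).add_const q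
  have d1 : HasDerivAt (fun s : ℝ => p*s^2*(2*Real.log s))
      (p*(2*x)*(2*Real.log x) + p*x^2*(2*x⁻¹)) x := by
    have ha : HasDerivAt (fun s : ℝ => p*s^2) (p*(2*x)) x := by
      simpa using ((hasDerivAt_pow 2 x).const_mul p)
    exact ha.mul ((Real.hasDerivAt_log hx0).const_mul 2)
  have d2 : HasDerivAt (fun s : ℝ => (p*s^2+q)*Real.log (p*s^2+q))
      (p*(2*x)*Real.log (p*x^2+q) + (p*x^2+q)*(p*(2*x)/(p*x^2+q))) x :=
    d3.mul (d3.log hpx.ne')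
  have := d0.sub ((d1.sub d2).const_mul c)
  have heq : (fun s : ℝ => p*q*(s-1)^2 - c*(p*s^2*(2*Real.log s) - (p*s^2+q)*Real.log (p*s^2+q)))
      = Hf p q c := rfl
  change HasDerivAt (Hf p q c) _ x at this
  convert this using 1
  unfold Psi
  field_simp
  ring

lemma lsi_values (p q c : ℝ) (hp : 0 < p) (hq : 0 < q) (hpq : p + q = 1) (hlt : p < q)
    (hc : c * (Real.log q - Real.log p) = q - p) :
    Psi p q c 1 = 0 ∧ Hf p q c 1 = 0 ∧ Psi p q c (q/p) = 0 ∧ Hf p q c (q/p) = 0 := by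
  have hq' : q = 1 - p := by linarith
  subst hq'
  have harg : p*((1-p)/p)^2 + (1-p) = (1-p)/p := by field_simp; ring
  have hlog : Real.log ((1-p)/p) = Real.log (1-p) - Real.log p := Real.log_div hq.ne' hp.ne'
  refine ⟨?_, ?_, ?_, ?_⟩
  · simp [Psi]
  · simp [Hf]
  · rw [Psi, harg, hlog]
    field_simp
    linear_combination (-1 : ℝ) * hc
  · rw [Hf, harg, hlog]
    field_simp
    linear_combination (-1+3*p-2*p^2) * hc

lemma lsi_facts (p q c : ℝ) (hp : 0 < p) (hq : 0 < q) (hpq : p + q = 1) (hlt : p < q)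
    (hc : c * (Real.log q - Real.log p) = q - p) :
    0 < c ∧ p < c ∧ c < q ∧ p*q < c^2 ∧ 2*c < 1 := by
  have hL : 0 < Real.log q - Real.log p := sub_pos.2 (Real.log_lt_log hp hlt)
  have hqp1 : 1 < q/p := (one_lt_div hp).2 hlt
  have hqp0 : 0 < q/p := lt_trans one_pos hqp1
  have hlogqp : Real.log (q/p) = Real.log q - Real.log p := Real.log_div hq.ne' hp.ne'
  have hcpos : 0 < c := by
    have hc' : c = (q-p) / (Real.log q - Real.log p) := by
      field_simp; linarith [hc]
    rw [hc']; exact div_pos (sub_pos.2 hlt) hL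
  refine ⟨hcpos, ?_, ?_, ?_, ?_⟩
  · -- p < c
    have h1 : Real.log (q/p) < q/p - 1 := Real.log_lt_sub_one_of_pos hqp0 (ne_of_gt hqp1)
    rw [hlogqp] at h1
    have h2 := mul_lt_mul_of_pos_left h1 hp
    have h3 : p * (q/p - 1) = q - p := by field_simp
    rw [h3] at h2
    have h4 : p * (Real.log q - Real.log p) < c * (Real.log q - Real.log p) := by
      rw [hc]; exact h2
    exact lt_of_mul_lt_mul_right h4 hL.le
  · -- c < q
    have h1 : Real.log (p/q) < p/q - 1 :=
      Real.log_lt_sub_one_of_pos (div_pos hp hq) (ne_of_lt ((div_lt_one hq).2 hlt))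
    rw [Real.log_div hp.ne' hq.ne'] at h1
    have h2 := mul_lt_mul_of_pos_left h1 hq
    have h3 : q * (p/q - 1) = p - q := by field_simp
    rw [h3] at h2
    have h4 : c * (Real.log q - Real.log p) < q * (Real.log q - Real.log p) := by
      rw [hc]; nlinarith [h2]
    exact lt_of_mul_lt_mul_right h4 hL.le
  · -- GM < LM : p*q < c^2
    set x := Real.sqrt (q/p) with hxdef
    have hx2 : x^2 = q/p := Real.sq_sqrt hqp0.le
    have hx1 : 1 < x := by
      nlinarith [hx2, Real.sqrt_nonneg (q/p), hqp1]
    have hx0 : 0 < x := lt_trans one_pos hx1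
    have hlx : Real.log x = (Real.log q - Real.log p)/2 := by
      rw [hxdef, Real.log_sqrt hqp0.le, hlogqp]
      try ring
    have h1 : 2 * Real.log x < x - 1/x := two_log_lt hx1
    rw [hlx] at h1
    have hL2 : Real.log q - Real.log p < x - 1/x := by linarith
    have hsq : (Real.log q - Real.log p)^2 < (x - 1/x)^2 := by nlinarith [hL, hL2]
    have e1 : (x - 1/x)^2 = x^2 - 2 + 1/x^2 := by field_simp; ring
    rw [e1, hx2, one_div_div] at hsq
    have h2 : p*q*(Real.log q - Real.log p)^2 < p*q*(q/p - 2 + p/q) :=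
      mul_lt_mul_of_pos_left hsq (mul_pos hp hq)
    have h3 : p*q*(q/p - 2 + p/q) = (q-p)^2 := by field_simp; ring
    rw [h3] at h2
    have hc2 : c^2 * (Real.log q - Real.log p)^2 = (q-p)^2 := by
      rw [← hc]; ring
    have h4 : p*q*(Real.log q - Real.log p)^2 < c^2*(Real.log q - Real.log p)^2 := by
      rw [hc2]; exact h2
    exact lt_of_mul_lt_mul_right h4 (sq_nonneg _)
  · -- LM < AM : 2c < 1
    have h1 := am_aux hqp1
    rw [hlogqp] at h1
    have h2 := mul_lt_mul_of_pos_left h1 hp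
    have h3 : p * (2*(q/p - 1)) = 2*(q-p) := by field_simp; try ring
    have h4 : p * ((q/p + 1) * (Real.log q - Real.log p)) = (q+p)*(Real.log q - Real.log p) := by
      field_simp; try ring
    rw [h3, h4] at h2
    have h5 : 2*(q-p) < Real.log q - Real.log p := by
      have hqp : q + p = 1 := by linarith
      rw [hqp, one_mul] at h2; exact h2
    have h6 : (2*c) * (Real.log q - Real.log p) < 1 * (Real.log q - Real.log p) := by
      rw [one_mul]; nlinarith [hc, h5]
    exact lt_of_mul_lt_mul_right h6 hL.le

lemma core (p q c : ℝ) (hp : 0 < p) (hq : 0 < q) (hpq : p + q = 1) (hlt : p < q)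
    (hc : c * (Real.log q - Real.log p) = q - p)
    (hcpos : 0 < c) (hpc : p < c) (hcq : c < q) (hgm : p*q < c^2) (ham : 2*c < 1)
    (hPsi1 : Psi p q c 1 = 0) (hPsi0 : Psi p q c (q/p) = 0)
    (hHf1 : Hf p q c 1 = 0) (hHf0 : Hf p q c (q/p) = 0)
    {s : ℝ} (hs : 0 < s) : 0 ≤ Hf p q c s := by
  set σ := Real.sqrt (c^2 - p*q) with hσdef
  have hσ0 : 0 ≤ σ := Real.sqrt_nonneg _
  have hσ2 : σ^2 = c^2 - p*q := Real.sq_sqrt (by linarith)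
  have hσc : σ < c - p := by
    rw [hσdef, Real.sqrt_lt' (by linarith : (0:ℝ) < c - p)]
    nlinarith
  have hσq : σ < q - c := by
    rw [hσdef, Real.sqrt_lt' (by linarith : (0:ℝ) < q - c)]
    nlinarith
  set s1 := (c - σ)/p with hs1def
  set s2 := (c + σ)/p with hs2def
  set s0 := q/p with hs0def
  have h1s1 : 1 < s1 := by rw [hs1def, lt_div_iff₀ hp]; linarith
  have hs1pos : 0 < s1 := lt_trans one_pos h1s1
  have hs12 : s1 ≤ s2 := by
    rw [hs1def, hs2def]; gcongr; linarith
  have hs20 : s2 < s0 := by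
    rw [hs2def, hs0def, div_lt_div_iff₀ hp hp]; nlinarith
  have hs2pos : 0 < s2 := lt_of_lt_of_le hs1pos hs12
  have h1s0 : 1 < s0 := by rw [hs0def]; exact (one_lt_div hp).2 hlt
  have hQ : ∀ x : ℝ, p*x^2 - 2*c*x + q = p*(x - s1)*(x - s2) := by
    intro x
    rw [hs1def, hs2def]
    field_simp
    linear_combination x * hσ2 - hσ2 * x + hσ2
  -- monotonicity of Psi
  have contPsi : ∀ (D : Set ℝ), (∀ y ∈ D, 0 < y) → ContinuousOn (Psi p q c) D :=
    fun D hD y hy => ((hasDerivAt_Psi p q c hp hq (hD y hy)).continuousAt).continuousWithinAt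
  have diffPsi : ∀ (D : Set ℝ), (∀ y ∈ D, 0 < y) → DifferentiableOn ℝ (Psi p q c) D :=
    fun D hD y hy => ((hasDerivAt_Psi p q c hp hq (hD y hy)).differentiableAt).differentiableWithinAt
  have monoPsi1 : MonotoneOn (Psi p q c) (Set.Ioc 0 s1) := by
    apply monotoneOn_of_deriv_nonneg (convex_Ioc 0 s1)
      (contPsi _ (fun y hy => hy.1))
      (by rw [interior_Ioc]; exact diffPsi _ (fun y hy => hy.1))
    intro x hx
    rw [interior_Ioc] at hx
    rw [(hasDerivAt_Psi p q c hp hq hx.1).deriv]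
    apply div_nonneg _ (by positivity)
    rw [hQ x]
    have h2 : p*(x - s1) ≤ 0 := mul_nonpos_of_nonneg_of_nonpos hp.le (by linarith [hx.2])
    have h1 : 0 ≤ p*(x - s1)*(x - s2) := mul_nonneg_of_nonpos_of_nonpos h2 (by linarith [hx.2, hs12])
    exact mul_nonneg hq.le h1
  have antiPsi2 : AntitoneOn (Psi p q c) (Set.Icc s1 s2) := by
    apply antitoneOn_of_deriv_nonpos (convex_Icc s1 s2)
      (contPsi _ (fun y hy => lt_of_lt_of_le hs1pos hy.1))
      (by rw [interior_Icc]; exact diffPsi _ (fun y hy => lt_trans hs1pos hy.1))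
    intro x hx
    rw [interior_Icc] at hx
    have hxpos : 0 < x := lt_trans hs1pos hx.1
    rw [(hasDerivAt_Psi p q c hp hq hxpos).deriv]
    apply div_nonpos_of_nonpos_of_nonneg _ (by positivity)
    rw [hQ x]
    have h2 : 0 ≤ p*(x - s1) := mul_nonneg hp.le (by linarith [hx.1])
    have h1 : p*(x - s1)*(x - s2) ≤ 0 := mul_nonpos_of_nonneg_of_nonpos h2 (by linarith [hx.2])
    exact mul_nonpos_of_nonneg_of_nonpos hq.le h1
  have monoPsi3 : MonotoneOn (Psi p q c) (Set.Ici s2) := by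
    apply monotoneOn_of_deriv_nonneg (convex_Ici s2)
      (contPsi _ (fun y hy => lt_of_lt_of_le hs2pos hy))
      (by rw [interior_Ici]; exact diffPsi _ (fun y hy => lt_trans hs2pos hy))
    intro x hx
    rw [interior_Ici] at hx
    have hx' : s2 < x := hx
    have hxpos : 0 < x := lt_trans hs2pos hx'
    rw [(hasDerivAt_Psi p q c hp hq hxpos).deriv]
    apply div_nonneg _ (by positivity)
    rw [hQ x]
    have h1 : 0 ≤ p*(x - s1)*(x - s2) :=
      mul_nonneg (mul_nonneg hp.le (by linarith [hx', hs12])) (by linarith [hx'])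
    exact mul_nonneg hq.le h1
  -- sign values
  have hPsis1 : 0 ≤ Psi p q c s1 := by
    have := monoPsi1 ⟨one_pos, h1s1.le⟩ ⟨hs1pos, le_refl s1⟩ h1s1.le
    rw [hPsi1] at this; exact this
  have hPsis2 : Psi p q c s2 ≤ 0 := by
    have := monoPsi3 (Set.self_mem_Ici) (Set.mem_Ici.2 hs20.le) hs20.le
    rw [hPsi0] at this; exact this
  -- IVT: find t with Psi t = 0 in [s1, s2]
  obtain ⟨t, htmem, ht0⟩ : ∃ t ∈ Set.Icc s1 s2, Psi p q c t = 0 := by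
    have hsub := intermediate_value_Icc' hs12
      (contPsi _ (fun y hy => lt_of_lt_of_le hs1pos hy.1))
    have h0mem : (0:ℝ) ∈ Set.Icc (Psi p q c s2) (Psi p q c s1) := ⟨hPsis2, hPsis1⟩
    obtain ⟨t, ht, ht'⟩ := hsub h0mem
    exact ⟨t, ht, ht'⟩
  have h1t : 1 < t := lt_of_lt_of_le h1s1 htmem.1
  have hts0 : t < s0 := lt_of_le_of_lt htmem.2 hs20
  -- H monotonicity pieces
  have contH : ∀ (D : Set ℝ), (∀ y ∈ D, 0 < y) → ContinuousOn (Hf p q c) D :=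
    fun D hD y hy => ((hasDerivAt_Hf p q c hp hq (hD y hy)).continuousAt).continuousWithinAt
  have diffH : ∀ (D : Set ℝ), (∀ y ∈ D, 0 < y) → DifferentiableOn ℝ (Hf p q c) D :=
    fun D hD y hy => ((hasDerivAt_Hf p q c hp hq (hD y hy)).differentiableAt).differentiableWithinAt
  have antiH1 : AntitoneOn (Hf p q c) (Set.Ioc 0 1) := by
    apply antitoneOn_of_deriv_nonpos (convex_Ioc 0 1)
      (contH _ (fun y hy => hy.1))
      (by rw [interior_Ioc]; exact diffH _ (fun y hy => hy.1))
    intro x hx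
    rw [interior_Ioc] at hx
    have hx0 : 0 < x := hx.1
    rw [(hasDerivAt_Hf p q c hp hq hx0).deriv]
    have hPx : Psi p q c x ≤ 0 := by
      have := monoPsi1 ⟨hx0, le_of_lt (lt_trans hx.2 h1s1)⟩ ⟨one_pos, h1s1.le⟩ hx.2.le
      rw [hPsi1] at this; exact this
    have : 0 ≤ 2*p*x := by positivity
    exact mul_nonpos_of_nonneg_of_nonpos this hPx
  have monoH2 : MonotoneOn (Hf p q c) (Set.Icc 1 t) := by
    apply monotoneOn_of_deriv_nonneg (convex_Icc 1 t)
      (contH _ (fun y hy => lt_of_lt_of_le one_pos hy.1))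
      (by rw [interior_Icc]; exact diffH _ (fun y hy => lt_trans one_pos hy.1))
    intro x hx
    rw [interior_Icc] at hx
    have hxpos : 0 < x := lt_trans one_pos hx.1
    rw [(hasDerivAt_Hf p q c hp hq hxpos).deriv]
    have hPx : 0 ≤ Psi p q c x := by
      rcases le_or_gt x s1 with h | h
      · have := monoPsi1 ⟨one_pos, h1s1.le⟩ ⟨hxpos, h⟩ hx.1.le
        rw [hPsi1] at this; exact this
      · have := antiPsi2 ⟨h.le, le_trans hx.2.le htmem.2⟩ htmem hx.2.le
        rw [ht0] at this; exact this
    exact mul_nonneg (by positivity) hPx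
  have antiH3 : AntitoneOn (Hf p q c) (Set.Icc t s0) := by
    apply antitoneOn_of_deriv_nonpos (convex_Icc t s0)
      (contH _ (fun y hy => lt_of_lt_of_le (lt_trans one_pos h1t) hy.1))
      (by rw [interior_Icc]; exact diffH _ (fun y hy => lt_trans (lt_trans one_pos h1t) hy.1))
    intro x hx
    rw [interior_Icc] at hx
    have hxpos : 0 < x := lt_trans (lt_trans one_pos h1t) hx.1
    rw [(hasDerivAt_Hf p q c hp hq hxpos).deriv]
    have hPx : Psi p q c x ≤ 0 := by
      rcases le_or_gt x s2 with h | h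
      · have := antiPsi2 htmem ⟨le_trans htmem.1 hx.1.le, h⟩ hx.1.le
        rw [ht0] at this; exact this
      · have := monoPsi3 (Set.mem_Ici.2 h.le) (Set.mem_Ici.2 hs20.le) hx.2.le
        rw [hPsi0] at this; exact this
    have h2 : 0 ≤ 2*p*x := by positivity
    exact mul_nonpos_of_nonneg_of_nonpos h2 hPx
  have monoH4 : MonotoneOn (Hf p q c) (Set.Ici s0) := by
    apply monotoneOn_of_deriv_nonneg (convex_Ici s0)
      (contH _ (fun y hy => lt_of_lt_of_le (lt_trans one_pos h1s0) hy))
      (by rw [interior_Ici]; exact diffH _ (fun y hy => lt_trans (lt_trans one_pos h1s0) hy))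
    intro x hx
    rw [interior_Ici] at hx
    have hxpos : 0 < x := lt_trans (lt_trans one_pos h1s0) hx
    rw [(hasDerivAt_Hf p q c hp hq hxpos).deriv]
    have hPx : 0 ≤ Psi p q c x := by
      have := monoPsi3 (Set.mem_Ici.2 hs20.le) (Set.mem_Ici.2 (le_trans hs20.le hx.le)) hx.le
      rw [hPsi0] at this; exact this
    exact mul_nonneg (by positivity) hPx
  -- conclusion
  rcases le_or_gt s 1 with h | h
  · have := antiH1 ⟨hs, h⟩ ⟨one_pos, le_refl 1⟩ h
    rw [hHf1] at this; exact this
  · rcases le_or_gt s t with h2 | h2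
    · have := monoH2 ⟨le_refl 1, h1t.le⟩ ⟨h.le, h2⟩ h.le
      rw [hHf1] at this; exact this
    · rcases le_or_gt s s0 with h3 | h3
      · have := antiH3 ⟨h2.le, h3⟩ ⟨hts0.le, le_refl s0⟩ h3
        rw [hHf0] at this; exact this
      · have := monoH4 (Set.self_mem_Ici) (Set.mem_Ici.2 h3.le) h3.le
        rw [hHf0] at this; exact this

lemma coreH (p q c : ℝ) (hp : 0 < p) (hq : 0 < q) (hpq : p + q = 1) (hlt : p < q)
    (hc : c * (Real.log q - Real.log p) = q - p)
    {s : ℝ} (hs : 0 < s) : 0 ≤ Hf p q c s := by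
  obtain ⟨hcpos, hpc, hcq, hgm, ham⟩ := lsi_facts p q c hp hq hpq hlt hc
  obtain ⟨h1, h2, h3, h4⟩ := lsi_values p q c hp hq hpq hlt hc
  exact core p q c hp hq hpq hlt hc hcpos hpc hcq hgm ham h1 h3 h2 h4 hs

lemma entropy_ineq (p q c : ℝ) (hp : 0 < p) (hq : 0 < q) (hpq : p + q = 1) (hlt : p < q)
    (hc : c * (Real.log q - Real.log p) = q - p)
    {s y : ℝ} (hs : 0 < s) (hy : 0 < y) :
    c * (p*(s^2*y*Real.log (s^2*y)) + q*(y*Real.log y)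
        - (p*(s^2*y)+q*y)*Real.log (p*(s^2*y)+q*y)) ≤ p*q*((s-1)^2*y) := by
  have hcore := coreH p q c hp hq hpq hlt hc hs
  have hlog1 : Real.log (s^2*y) = 2*Real.log s + Real.log y := by
    rw [Real.log_mul (by positivity) hy.ne', Real.log_pow]
    norm_num
  have hmix : p*(s^2*y)+q*y = (p*s^2+q)*y := by ring
  have hlog2 : Real.log ((p*s^2+q)*y) = Real.log (p*s^2+q) + Real.log y := by
    rw [Real.log_mul (by positivity) hy.ne']
  have heq : c * (p*(s^2*y*Real.log (s^2*y)) + q*(y*Real.log y)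
        - (p*(s^2*y)+q*y)*Real.log (p*(s^2*y)+q*y))
      = y * (c*(p*s^2*(2*Real.log s) - (p*s^2+q)*Real.log (p*s^2+q))) := by
    rw [hlog1, hmix, hlog2]; ring
  rw [heq]
  have h2 : c*(p*s^2*(2*Real.log s) - (p*s^2+q)*Real.log (p*s^2+q)) ≤ p*q*(s-1)^2 := by
    have := hcore; unfold Hf at this; linarith
  calc y * (c*(p*s^2*(2*Real.log s) - (p*s^2+q)*Real.log (p*s^2+q)))
      ≤ y * (p*q*(s-1)^2) := mul_le_mul_of_nonneg_left h2 hy.le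
    _ = p*q*((s-1)^2*y) := by ring

lemma main_ordered (a b x y : ℝ) (ha : 0 < a) (hb : 0 < b) (hba : b < a)
    (hx : 0 < x) (hy : 0 < y) :
    (a * b / (a + b)) * (Real.sqrt x - Real.sqrt y) ^ 2 ≥
      ((a - b) / (Real.log a - Real.log b)) *
        ((b / (a + b)) * (x * Real.log x) + (a / (a + b)) * (y * Real.log y)
          - ((b / (a + b)) * x + (a / (a + b)) * y) *
              Real.log ((b / (a + b)) * x + (a / (a + b)) * y)) := by
  have hab : 0 < a + b := by linarith
  have hp : 0 < b / (a+b) := div_pos hb hab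
  have hq : 0 < a / (a+b) := div_pos ha hab
  have hpq : b/(a+b) + a/(a+b) = 1 := by field_simp; ring
  have hlt : b/(a+b) < a/(a+b) := by
    gcongr
  have hLab : Real.log (a/(a+b)) - Real.log (b/(a+b)) = Real.log a - Real.log b := by
    rw [Real.log_div ha.ne' hab.ne', Real.log_div hb.ne' hab.ne']; ring
  have hL : 0 < Real.log a - Real.log b := sub_pos.2 (Real.log_lt_log hb hba)
  set c : ℝ := ((a-b)/(Real.log a - Real.log b))/(a+b) with hcdef
  have hc : c * (Real.log (a/(a+b)) - Real.log (b/(a+b))) = a/(a+b) - b/(a+b) := by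
    rw [hLab, hcdef]
    field_simp
  have hrho : (a-b)/(Real.log a - Real.log b) = (a+b) * c := by
    rw [hcdef]; field_simp
  -- sqrt substitution
  have hsx : 0 < Real.sqrt x := Real.sqrt_pos.2 hx
  have hsy : 0 < Real.sqrt y := Real.sqrt_pos.2 hy
  set s : ℝ := Real.sqrt x / Real.sqrt y with hsdef
  have hs : 0 < s := div_pos hsx hsy
  have hxy : x = s^2 * y := by
    rw [hsdef, div_pow, Real.sq_sqrt hx.le, Real.sq_sqrt hy.le]
    field_simp
  have hsq : (Real.sqrt x - Real.sqrt y)^2 = (s-1)^2 * y := by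
    have h1 : Real.sqrt x = s * Real.sqrt y := by rw [hsdef]; field_simp
    rw [h1, show (s*Real.sqrt y - Real.sqrt y)^2 = (s-1)^2*(Real.sqrt y)^2 from by ring,
      Real.sq_sqrt hy.le]
  have hconst : a * b / (a+b) = (a+b) * ((b/(a+b)) * (a/(a+b))) := by
    field_simp
  rw [ge_iff_le, hconst, hsq, hrho, hxy]
  have h := entropy_ineq (b/(a+b)) (a/(a+b)) c hp hq hpq hlt hc hs hy
  calc (a+b)*c * ((b/(a+b)) * (s^2*y * Real.log (s^2*y)) + (a/(a+b)) * (y * Real.log y)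
          - ((b/(a+b)) * (s^2*y) + (a/(a+b)) * y) * Real.log ((b/(a+b)) * (s^2*y) + (a/(a+b)) * y))
      = (a+b) * (c * ((b/(a+b)) * (s^2*y * Real.log (s^2*y)) + (a/(a+b)) * (y * Real.log y)
          - ((b/(a+b)) * (s^2*y) + (a/(a+b)) * y) * Real.log ((b/(a+b)) * (s^2*y) + (a/(a+b)) * y))) := by ring
    _ ≤ (a+b) * ((b/(a+b))*(a/(a+b))*((s-1)^2*y)) := by
        apply mul_le_mul_of_nonneg_left _ hab.le
        exact h
    _ = (a+b) * ((b/(a+b)) * (a/(a+b))) * ((s-1)^2*y) := by ring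

/-- Two-state log-Sobolev inequality with constant `ρ = (a-b)/(log a - log b)`. -/
theorem two_state_lsi (a b : ℝ) (ha : 0 < a) (hb : 0 < b) (hab : a ≠ b)
    (f : Fin 2 → ℝ) (hf : ∀ i, 0 < f i) :
    (a * b / (a + b)) * (Real.sqrt (f 0) - Real.sqrt (f 1)) ^ 2 ≥
      ((a - b) / (Real.log a - Real.log b)) *
        ((b / (a + b)) * (f 0 * Real.log (f 0)) + (a / (a + b)) * (f 1 * Real.log (f 1))
          - ((b / (a + b)) * f 0 + (a / (a + b)) * f 1) *
              Real.log ((b / (a + b)) * f 0 + (a / (a + b)) * f 1)) := by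
  rcases lt_or_gt_of_ne hab with h | h
  · -- a < b : apply with roles swapped
    have key := main_ordered b a (f 1) (f 0) hb ha h (hf 1) (hf 0)
    rw [show b + a = a + b from add_comm b a,
      show (b - a) / (Real.log b - Real.log a) = (a - b) / (Real.log a - Real.log b) from by
        rw [← neg_sub a b, ← neg_sub (Real.log a) (Real.log b), neg_div_neg_eq],
      show a/(a+b) * f 1 + b/(a+b) * f 0 = b/(a+b) * f 0 + a/(a+b) * f 1 from add_comm _ _] at key
    calc ((a - b) / (Real.log a - Real.log b)) *
        ((b / (a + b)) * (f 0 * Real.log (f 0)) + (a / (a + b)) * (f 1 * Real.log (f 1))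
          - ((b / (a + b)) * f 0 + (a / (a + b)) * f 1) *
              Real.log ((b / (a + b)) * f 0 + (a / (a + b)) * f 1))
        = ((a - b) / (Real.log a - Real.log b)) *
        ((a / (a + b)) * (f 1 * Real.log (f 1)) + (b / (a + b)) * (f 0 * Real.log (f 0))
          - ((b / (a + b)) * f 0 + (a / (a + b)) * f 1) *
              Real.log ((b / (a + b)) * f 0 + (a / (a + b)) * f 1)) := by ring
      _ ≤ (b * a / (a + b)) * (Real.sqrt (f 1) - Real.sqrt (f 0)) ^ 2 := key
      _ = (a * b / (a + b)) * (Real.sqrt (f 0) - Real.sqrt (f 1)) ^ 2 := by ring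
  · exact main_ordered a b (f 0) (f 1) ha hb h (hf 0) (hf 1)
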